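/- arXiv:1609.00115 — 5 statements merged into one kernel-verified Lean document; each statement's English description precedes it below -/
import Mathlib

section
/- For every b > 0 and every v ∈ ℝ, the integral over τ ∈ (0, ∞) of the product of the centered Gaussian density with standard deviation τ evaluated at v and the Rayleigh density with scale b evaluated at τ equals the Laplace density with mean 0 and scale b evaluated at v; that is, ∫₀^∞ (1/(√(2π)·τ))·exp(−v²/(2τ²)) · (τ/b²)·exp(−τ²/(2b²)) dτ = (1/(2b))·exp(−|v|/b). -/
open Real MeasureTheory


open Set Filter Topology

-- derivative helper
lemma hasDerivAt_lin_sub_inv (p a x : ℝ) (hx : x ≠ 0) :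
    HasDerivAt (fun t : ℝ => p * t - a / t) (p + a / x ^ 2) x := by
  have h1 : HasDerivAt (fun t : ℝ => p * t) p x := by
    simpa using (hasDerivAt_id x).const_mul p
  have h2 : HasDerivAt (fun t : ℝ => a / t) (-a / x ^ 2) x := by
    simpa [div_eq_mul_inv, neg_div, mul_comm] using (hasDerivAt_inv hx).const_mul a
  have : HasDerivAt (fun t : ℝ => p * t - a / t) (p - -a / x ^ 2) x := h1.sub h2
  convert this using 1
  ring

lemma hasDerivAt_lin_add_inv (p a x : ℝ) (hx : x ≠ 0) :
    HasDerivAt (fun t : ℝ => p * t + a / t) (p - a / x ^ 2) x := by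
  have h1 : HasDerivAt (fun t : ℝ => p * t) p x := by
    simpa using (hasDerivAt_id x).const_mul p
  have h2 : HasDerivAt (fun t : ℝ => a / t) (-a / x ^ 2) x := by
    simpa [div_eq_mul_inv, neg_div, mul_comm] using (hasDerivAt_inv hx).const_mul a
  have : HasDerivAt (fun t : ℝ => p * t + a / t) (p + -a / x ^ 2) x := h1.add h2
  convert this using 1
  ring

lemma glasser {a p : ℝ} (ha : 0 < a) (hp : 0 < p) :
    ∫ x in Set.Ioi (0:ℝ), Real.exp (-(p * x - a / x) ^ 2)
      = Real.sqrt π / (2 * p) := by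
  set g : ℝ → ℝ := fun x => p * x - a / x with hg
  set h : ℝ → ℝ := fun x => p * x + a / x with hh
  set m : ℝ := Real.sqrt (a / p) with hmdef
  have hm : 0 < m := Real.sqrt_pos.mpr (div_pos ha hp)
  have ham : a = p * m ^ 2 := by
    rw [hmdef, Real.sq_sqrt (div_pos ha hp).le]; field_simp
  set c : ℝ := 2 * p * m with hcdef
  have hhm : h m = c := by
    simp only [hh, hcdef, ham]; field_simp; ring
  -- derivative facts
  have hgder : ∀ x ∈ Ioi (0:ℝ), HasDerivWithinAt g (p + a / x ^ 2) (Ioi 0) x :=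
    fun x hx => (hasDerivAt_lin_sub_inv p a x (ne_of_gt hx)).hasDerivWithinAt
  have hhder1 : ∀ x ∈ Ioo (0:ℝ) m, HasDerivWithinAt h (p - a / x ^ 2) (Ioo 0 m) x :=
    fun x hx => (hasDerivAt_lin_add_inv p a x (ne_of_gt hx.1)).hasDerivWithinAt
  have hhder2 : ∀ x ∈ Ici m, HasDerivWithinAt h (p - a / x ^ 2) (Ici m) x :=
    fun x hx => (hasDerivAt_lin_add_inv p a x (ne_of_gt (lt_of_lt_of_le hm hx))).hasDerivWithinAt
  -- monotonicity / injectivity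
  have hginj : InjOn g (Ioi 0) := by
    have : StrictMonoOn g (Ioi 0) := by
      intro x hx y hy hxy
      simp only [hg]
      have hx0 : (0:ℝ) < x := hx
      have hy0 : (0:ℝ) < y := hy
      have key : (p * y - a / y) - (p * x - a / x) = (y - x) * (p + a / (x * y)) := by
        field_simp; ring
      nlinarith [div_pos ha (mul_pos hx0 hy0), mul_pos (sub_pos.mpr hxy)
        (add_pos hp (div_pos ha (mul_pos hx0 hy0)))]
    exact this.injOn
  have hhanti : StrictAntiOn h (Ioo 0 m) := by
    intro x hx y hy hxy
    simp only [hh]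
    have hx0 : (0:ℝ) < x := hx.1
    have hy0 : (0:ℝ) < y := hy.1
    have hxym : x * y < a / p := by
      rw [ham]; field_simp
      nlinarith [hx.2, hy.2, hm]
    have key : (p * x + a / x) - (p * y + a / y) = (y - x) * (a / (x * y) - p) := by
      field_simp; ring
    have h2 : p < a / (x * y) := by
      rw [lt_div_iff₀ (mul_pos hx0 hy0)]
      calc p * (x * y) < p * (a / p) := by
            exact (mul_lt_mul_iff_right₀ hp).mpr hxym
        _ = a := by field_simp
    nlinarith [mul_pos (sub_pos.mpr hxy) (sub_pos.mpr h2)]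
  have hhmono : StrictMonoOn h (Ici m) := by
    intro x hx y hy hxy
    simp only [hh]
    have hx0 : (0:ℝ) < x := lt_of_lt_of_le hm hx
    have hy0 : (0:ℝ) < y := lt_of_lt_of_le hm hy
    have hxym : a / p < x * y := by
      rw [ham]; field_simp
      nlinarith [mul_lt_mul_of_pos_left (lt_of_le_of_lt hx hxy) hm,
        mul_le_mul_of_nonneg_right (hx : m ≤ x) hy0.le]
    have h2 : a / (x * y) < p := by
      rw [div_lt_iff₀ (mul_pos hx0 hy0)]
      calc a = p * (a / p) := by field_simp
        _ < p * (x * y) := (mul_lt_mul_iff_right₀ hp).mpr hxym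
    have key : (p * y + a / y) - (p * x + a / x) = (y - x) * (p - a / (x * y)) := by
      field_simp; ring
    nlinarith [mul_pos (sub_pos.mpr hxy) (sub_pos.mpr h2)]
  -- limits
  have hcont : ∀ x : ℝ, x ≠ 0 → ContinuousAt h x := by
    intro x hx
    exact (continuousAt_const.mul continuousAt_id).add
      (continuousAt_const.div continuousAt_id hx)
  have hgcont : ContinuousOn g (Ioi 0) := by
    intro x hx
    have hx0 : (0:ℝ) < x := hx
    exact (((continuousAt_const.mul continuousAt_id).sub
      (continuousAt_const.div continuousAt_id hx0.ne'))).continuousWithinAt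
  have htop : Tendsto (fun x : ℝ => a / x) (𝓝[>] (0:ℝ)) atTop := by
    simpa [div_eq_mul_inv] using tendsto_inv_nhdsGT_zero.const_mul_atTop ha
  -- image of g is univ
  have hgimg : g '' Ioi 0 = univ := by
    apply eq_univ_of_univ_subset
    have l1 : Tendsto g (𝓝[>] (0:ℝ)) atBot := by
      have h2 : Tendsto (fun x : ℝ => -(a / x)) (𝓝[>] (0:ℝ)) atBot :=
        tendsto_neg_atTop_atBot.comp htop
      have h1 : Tendsto (fun x : ℝ => p * x) (𝓝[>] (0:ℝ)) (𝓝 0) := by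
        have h0 := ((continuous_const.mul continuous_id :
          Continuous fun x : ℝ => p * x)).tendsto 0
        have h0' : Tendsto (fun x : ℝ => p * x) (𝓝 (0:ℝ)) (𝓝 (p * 0)) := h0
        simpa only [mul_zero] using h0'.mono_left nhdsWithin_le_nhds
      simpa [hg, sub_eq_add_neg] using h1.add_atBot h2
    have l2 : Tendsto g atTop atTop := by
      have h1 : Tendsto (fun x : ℝ => p * x) atTop atTop :=
        tendsto_id.const_mul_atTop hp
      have h2 : Tendsto (fun x : ℝ => a / x) atTop (𝓝 0) := by
        simpa [div_eq_mul_inv] using tendsto_inv_atTop_zero.const_mul a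
      simpa [hg, sub_eq_add_neg] using h1.atTop_add (h2.neg)
    exact (isPreconnected_Ioi).intermediate_value_Iii
      (le_principal_iff.mpr self_mem_nhdsWithin)
      (le_principal_iff.mpr (Ioi_mem_atTop 0)) hgcont l1 l2
  -- image of h on pieces
  have hhimg2 : h '' Ici m = Ici c := by
    apply Subset.antisymm
    · rintro y ⟨x, hx, rfl⟩
      rcases eq_or_lt_of_le (mem_Ici.mp hx) with rfl | hlt
      · simp [hhm]
      · exact le_of_lt (hhm ▸ hhmono (self_mem_Ici) hx hlt)
    · have l2 : Tendsto h atTop atTop := by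
        have h1 : Tendsto (fun x : ℝ => p * x) atTop atTop :=
          tendsto_id.const_mul_atTop hp
        have h2 : Tendsto (fun x : ℝ => a / x) atTop (𝓝 0) := by
          simpa [div_eq_mul_inv] using tendsto_inv_atTop_zero.const_mul a
        simpa [hh] using h1.atTop_add h2
      have := (isPreconnected_Ici).intermediate_value_Ici (self_mem_Ici (a := m))
        (le_principal_iff.mpr (Ici_mem_atTop m))
        (fun x hx => (hcont x (ne_of_gt (lt_of_lt_of_le hm hx))).continuousWithinAt) l2
      rwa [hhm] at this
  have hhimg1 : h '' Ioo 0 m = Ioi c := by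
    apply Subset.antisymm
    · rintro y ⟨x, hx, rfl⟩
      have hx0' : x ≠ 0 := ne_of_gt hx.1
      have hxm : x - m ≠ 0 := sub_ne_zero.mpr (ne_of_lt hx.2)
      have key : p * x + a / x - c = p * (x - m) ^ 2 / x := by
        simp only [hcdef, ham]; field_simp; ring
      have hpos : 0 < p * (x - m) ^ 2 / x :=
        div_pos (mul_pos hp (by positivity : (0:ℝ) < (x - m) ^ 2)) hx.1
      have : c < p * x + a / x := by linarith
      exact mem_Ioi.mpr this
    · have hne1 : (𝓝[Ioo (0:ℝ) m] m).NeBot := by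
        refine mem_closure_iff_nhdsWithin_neBot.mp ?_
        rw [closure_Ioo (ne_of_lt hm)]
        exact right_mem_Icc.mpr hm.le
      have hne2 : (𝓝[Ioo (0:ℝ) m] 0).NeBot := by
        refine mem_closure_iff_nhdsWithin_neBot.mp ?_
        rw [closure_Ioo (ne_of_lt hm)]
        exact left_mem_Icc.mpr hm.le
      have t1 : Tendsto h (𝓝[Ioo (0:ℝ) m] m) (𝓝 c) := by
        rw [← hhm]
        exact (hcont m (ne_of_gt hm)).tendsto.mono_left nhdsWithin_le_nhds
      have t2 : Tendsto h (𝓝[Ioo (0:ℝ) m] 0) atTop := by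
        have hmono' : 𝓝[Ioo (0:ℝ) m] (0:ℝ) ≤ 𝓝[>] 0 :=
          nhdsWithin_mono 0 Ioo_subset_Ioi_self
        have h1 : Tendsto (fun x : ℝ => p * x) (𝓝[Ioo (0:ℝ) m] 0) (𝓝 0) := by
          have h0 := ((continuous_const.mul continuous_id :
            Continuous fun x : ℝ => p * x)).tendsto 0
          have h0' : Tendsto (fun x : ℝ => p * x) (𝓝 (0:ℝ)) (𝓝 (p * 0)) := h0
          simpa only [mul_zero] using h0'.mono_left nhdsWithin_le_nhds
        simpa [hh] using h1.add_atTop (htop.mono_left hmono')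
      exact (isPreconnected_Ioo).intermediate_value_Ioi
        (le_principal_iff.mpr self_mem_nhdsWithin)
        (le_principal_iff.mpr self_mem_nhdsWithin)
        (fun x hx => (hcont x (ne_of_gt hx.1)).continuousWithinAt) t1 t2
  -- integrability of the Gaussian
  have hexp : Integrable (fun u : ℝ => Real.exp (-u ^ 2)) := by
    simpa using integrable_exp_neg_mul_sq (one_pos)
  have hgint_eq : ∫ u : ℝ, Real.exp (-u ^ 2) = Real.sqrt π := by
    simpa using integral_gaussian 1
  -- change of variables with g
  have hI1eq : ∫ x in Ioi (0:ℝ), |p + a / x ^ 2| * Real.exp (-(g x) ^ 2) = Real.sqrt π := by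
    have h0 := integral_image_eq_integral_abs_deriv_smul measurableSet_Ioi hgder hginj
      (fun u => Real.exp (-u ^ 2))
    rw [hgimg, Measure.restrict_univ] at h0
    rw [hgint_eq] at h0
    simpa [smul_eq_mul] using h0.symm
  have hI1int : IntegrableOn (fun x => |p + a / x ^ 2| * Real.exp (-(g x) ^ 2)) (Ioi 0) := by
    have h0 := (integrableOn_image_iff_integrableOn_abs_deriv_smul measurableSet_Ioi hgder hginj
      (fun u => Real.exp (-u ^ 2))).mp (by rw [hgimg]; exact hexp.integrableOn)
    simpa [smul_eq_mul] using h0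
  have habs1 : ∀ x ∈ Ioi (0:ℝ), |p + a / x ^ 2| = p + a / x ^ 2 := fun x hx =>
    abs_of_pos (add_pos hp (div_pos ha (pow_pos (mem_Ioi.mp hx) 2)))
  have hG1eq : ∫ x in Ioi (0:ℝ), (p + a / x ^ 2) * Real.exp (-(g x) ^ 2) = Real.sqrt π := by
    rw [← hI1eq]
    exact setIntegral_congr_fun measurableSet_Ioi fun x hx => by rw [habs1 x hx]
  have hG1int : IntegrableOn (fun x => (p + a / x ^ 2) * Real.exp (-(g x) ^ 2)) (Ioi 0) :=
    hI1int.congr_fun (fun x hx => by dsimp only; rw [habs1 x hx]) measurableSet_Ioi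
  -- change of variables with h on the two pieces
  have habs2 : ∀ x ∈ Ici m, |p - a / x ^ 2| = p - a / x ^ 2 := by
    intro x hx
    have hx0 : (0:ℝ) < x := lt_of_lt_of_le hm hx
    have hle : a / x ^ 2 ≤ p := by
      rw [div_le_iff₀ (by positivity)]
      have hmx : m * m ≤ x * x :=
        mul_le_mul (hx : m ≤ x) (hx : m ≤ x) hm.le (hm.le.trans hx)
      nlinarith [ham, mul_le_mul_of_nonneg_left hmx hp.le]
    exact abs_of_nonneg (by linarith)
  have habs3 : ∀ x ∈ Ioo (0:ℝ) m, |p - a / x ^ 2| = a / x ^ 2 - p := by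
    intro x hx
    have hx0 : (0:ℝ) < x := hx.1
    have hlt : p ≤ a / x ^ 2 := by
      rw [le_div_iff₀ (by positivity)]
      have hmx : x * x ≤ m * m :=
        mul_le_mul hx.2.le hx.2.le hx.1.le hm.le
      nlinarith [ham, mul_le_mul_of_nonneg_left hmx hp.le]
    rw [abs_of_nonpos (by linarith)]; ring
  have hI2eq : ∫ x in Ici m, |p - a / x ^ 2| * Real.exp (-(h x) ^ 2)
      = ∫ u in Ici c, Real.exp (-u ^ 2) := by
    have h0 := integral_image_eq_integral_abs_deriv_smul measurableSet_Ici hhder2 hhmono.injOn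
      (fun u => Real.exp (-u ^ 2))
    rw [hhimg2] at h0
    simpa [smul_eq_mul] using h0.symm
  have hI2int : IntegrableOn (fun x => |p - a / x ^ 2| * Real.exp (-(h x) ^ 2)) (Ici m) := by
    have h0 := (integrableOn_image_iff_integrableOn_abs_deriv_smul measurableSet_Ici hhder2
      hhmono.injOn (fun u => Real.exp (-u ^ 2))).mp (by rw [hhimg2]; exact hexp.integrableOn)
    simpa [smul_eq_mul] using h0
  have hI3eq : ∫ x in Ioo (0:ℝ) m, |p - a / x ^ 2| * Real.exp (-(h x) ^ 2)
      = ∫ u in Ioi c, Real.exp (-u ^ 2) := by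
    have h0 := integral_image_eq_integral_abs_deriv_smul measurableSet_Ioo hhder1 hhanti.injOn
      (fun u => Real.exp (-u ^ 2))
    rw [hhimg1] at h0
    simpa [smul_eq_mul] using h0.symm
  have hI3int : IntegrableOn (fun x => |p - a / x ^ 2| * Real.exp (-(h x) ^ 2)) (Ioo 0 m) := by
    have h0 := (integrableOn_image_iff_integrableOn_abs_deriv_smul measurableSet_Ioo hhder1
      hhanti.injOn (fun u => Real.exp (-u ^ 2))).mp (by rw [hhimg1]; exact hexp.integrableOn)
    simpa [smul_eq_mul] using h0
  -- the function F and its vanishing integral on Ioi 0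
  set F : ℝ → ℝ := fun x => (p - a / x ^ 2) * Real.exp (-(h x) ^ 2) with hF
  have hFint2 : IntegrableOn F (Ici m) :=
    hI2int.congr_fun (fun x hx => by simp only [hF]; rw [habs2 x hx]) measurableSet_Ici
  have hFeq2 : ∫ x in Ici m, F x = ∫ u in Ici c, Real.exp (-u ^ 2) := by
    rw [← hI2eq]
    exact setIntegral_congr_fun measurableSet_Ici fun x hx => by simp only [hF]; rw [habs2 x hx]
  have hFint3 : IntegrableOn F (Ioo 0 m) :=
    IntegrableOn.congr_fun (hI3int.neg) (fun x hx => by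
      simp only [hF, Pi.neg_apply]; rw [habs3 x hx]; ring) measurableSet_Ioo
  have hFeq3 : ∫ x in Ioo (0:ℝ) m, F x = -∫ u in Ioi c, Real.exp (-u ^ 2) := by
    rw [← hI3eq, ← integral_neg]
    exact setIntegral_congr_fun measurableSet_Ioo fun x hx => by
      simp only [hF]; rw [habs3 x hx]; ring
  have hsplit : Ioo (0:ℝ) m ∪ Ici m = Ioi 0 := Ioo_union_Ici_eq_Ioi hm
  have hdisj : Disjoint (Ioo (0:ℝ) m) (Ici m) :=
    disjoint_left.mpr fun x hx hx' => absurd hx.2 (not_lt.mpr hx')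
  have hFintIoi : IntegrableOn F (Ioi 0) := by rw [← hsplit]; exact hFint3.union hFint2
  have hFzero : ∫ x in Ioi (0:ℝ), F x = 0 := by
    rw [← hsplit, setIntegral_union hdisj measurableSet_Ici hFint3 hFint2, hFeq3, hFeq2,
      integral_Ici_eq_integral_Ioi]
    ring
  -- relate h to g in the exponent
  have hgh : ∀ x ∈ Ioi (0:ℝ), Real.exp (-(g x) ^ 2)
      = Real.exp (4 * (a * p)) * Real.exp (-(h x) ^ 2) := by
    intro x hx
    have hx0 : x ≠ 0 := ne_of_gt (mem_Ioi.mp hx)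
    rw [← Real.exp_add]
    congr 1
    simp only [hg, hh]
    field_simp
    ring
  set G2 : ℝ → ℝ := fun x => (p - a / x ^ 2) * Real.exp (-(g x) ^ 2) with hG2
  have hG2congr : ∀ x ∈ Ioi (0:ℝ), G2 x = Real.exp (4 * (a * p)) * F x := by
    intro x hx
    simp only [hG2, hF]
    rw [hgh x hx]; ring
  have hG2int : IntegrableOn G2 (Ioi 0) :=
    IntegrableOn.congr_fun (hFintIoi.const_mul (Real.exp (4 * (a * p))))
      (fun x hx => (hG2congr x hx).symm) measurableSet_Ioi
  have hG2eq : ∫ x in Ioi (0:ℝ), G2 x = 0 := by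
    rw [setIntegral_congr_fun measurableSet_Ioi (fun x hx => hG2congr x hx), integral_const_mul,
      hFzero, mul_zero]
  -- put everything together
  have hsum : ∫ x in Ioi (0:ℝ), 2 * p * Real.exp (-(g x) ^ 2) = Real.sqrt π := by
    have heq : EqOn (fun x => 2 * p * Real.exp (-(g x) ^ 2))
        (fun x => (p + a / x ^ 2) * Real.exp (-(g x) ^ 2) + G2 x) (Ioi 0) := by
      intro x hx
      simp only [hG2]
      ring
    rw [setIntegral_congr_fun measurableSet_Ioi heq, integral_add hG1int hG2int, hG1eq, hG2eq,
      add_zero]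
  rw [integral_const_mul] at hsum
  rw [eq_div_iff (by positivity : (2:ℝ) * p ≠ 0)]
  linarith [hsum]

/-- The Gaussian scale mixture with Rayleigh mixing weights: for every `b > 0` and `v : ℝ`,
integrating the centered Gaussian density with standard deviation `τ` at `v` against the
Rayleigh density with scale `b` over `τ ∈ (0, ∞)` yields the Laplace density with mean `0`
and scale `b` at `v`. -/
theorem rayleigh_gaussian_mixture_eq_laplace_density (b v : ℝ) (hb : 0 < b) :
    ∫ τ in Set.Ioi (0 : ℝ),
      (1 / (Real.sqrt (2 * π) * τ)) * Real.exp (-v ^ 2 / (2 * τ ^ 2)) *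
        ((τ / b ^ 2) * Real.exp (-τ ^ 2 / (2 * b ^ 2)))
    = (1 / (2 * b)) * Real.exp (-|v| / b) := by
  have hb0 : b ≠ 0 := hb.ne'
  have hπ : (0:ℝ) < π := Real.pi_pos
  have hs2π : (0:ℝ) < Real.sqrt (2 * π) := Real.sqrt_pos.mpr (by positivity)
  rcases eq_or_ne v 0 with rfl | hv
  · have hcongr : Set.EqOn
        (fun τ : ℝ => (1 / (Real.sqrt (2 * π) * τ)) * Real.exp (-(0:ℝ) ^ 2 / (2 * τ ^ 2)) *
          ((τ / b ^ 2) * Real.exp (-τ ^ 2 / (2 * b ^ 2))))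
        (fun τ : ℝ => (1 / (Real.sqrt (2 * π) * b ^ 2)) * Real.exp (-(1 / (2 * b ^ 2)) * τ ^ 2))
        (Ioi 0) := by
      intro τ hτ
      have hτ0 : τ ≠ 0 := ne_of_gt (mem_Ioi.mp hτ)
      simp only
      rw [show -(0:ℝ) ^ 2 / (2 * τ ^ 2) = 0 by ring, Real.exp_zero,
        show -(1 / (2 * b ^ 2)) * τ ^ 2 = -τ ^ 2 / (2 * b ^ 2) by ring]
      field_simp
    rw [setIntegral_congr_fun measurableSet_Ioi hcongr, integral_const_mul,
      integral_gaussian_Ioi]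
    have h1 : π / (1 / (2 * b ^ 2)) = (2 * π) * b ^ 2 := by field_simp
    rw [h1, Real.sqrt_mul (by positivity) (b ^ 2), Real.sqrt_sq hb.le]
    rw [abs_zero, show -(0:ℝ)/b = 0 by ring, Real.exp_zero]
    field_simp
  · set a : ℝ := |v| / Real.sqrt 2 with hadef
    set p : ℝ := 1 / (Real.sqrt 2 * b) with hpdef
    have hs2 : (0:ℝ) < Real.sqrt 2 := by positivity
    have hs2sq : Real.sqrt 2 ^ 2 = 2 := Real.sq_sqrt (by norm_num)
    have ha : 0 < a := div_pos (abs_pos.mpr hv) hs2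
    have hp : 0 < p := by positivity
    have hcongr : Set.EqOn
        (fun τ : ℝ => (1 / (Real.sqrt (2 * π) * τ)) * Real.exp (-v ^ 2 / (2 * τ ^ 2)) *
          ((τ / b ^ 2) * Real.exp (-τ ^ 2 / (2 * b ^ 2))))
        (fun τ : ℝ => (Real.exp (-|v| / b) / (Real.sqrt (2 * π) * b ^ 2)) *
          Real.exp (-(p * τ - a / τ) ^ 2)) (Ioi 0) := by
      intro τ hτ
      have hτ0 : τ ≠ 0 := ne_of_gt (mem_Ioi.mp hτ)
      have hv2 : |v| ^ 2 = v ^ 2 := sq_abs v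
      have hkey : p * τ - a / τ = (τ / b - |v| / τ) / Real.sqrt 2 := by
        rw [hpdef, hadef]; field_simp
      have hexpeq : -v ^ 2 / (2 * τ ^ 2) + -τ ^ 2 / (2 * b ^ 2)
          = -|v| / b + -(p * τ - a / τ) ^ 2 := by
        rw [hkey, div_pow, hs2sq]
        field_simp
        linear_combination b ^ 2 * hv2
      have e1 : Real.exp (-v ^ 2 / (2 * τ ^ 2)) * Real.exp (-τ ^ 2 / (2 * b ^ 2))
          = Real.exp (-|v| / b) * Real.exp (-(p * τ - a / τ) ^ 2) := by
        rw [← Real.exp_add, ← Real.exp_add, hexpeq]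
      have hsne : Real.sqrt (2 * π) ≠ 0 := hs2π.ne'
      simp only
      calc (1 / (Real.sqrt (2 * π) * τ)) * Real.exp (-v ^ 2 / (2 * τ ^ 2)) *
            ((τ / b ^ 2) * Real.exp (-τ ^ 2 / (2 * b ^ 2)))
          = (1 / (Real.sqrt (2 * π) * b ^ 2)) *
            (Real.exp (-v ^ 2 / (2 * τ ^ 2)) * Real.exp (-τ ^ 2 / (2 * b ^ 2))) := by
            field_simp
        _ = (1 / (Real.sqrt (2 * π) * b ^ 2)) *
            (Real.exp (-|v| / b) * Real.exp (-(p * τ - a / τ) ^ 2)) := by rw [e1]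
        _ = (Real.exp (-|v| / b) / (Real.sqrt (2 * π) * b ^ 2)) *
            Real.exp (-(p * τ - a / τ) ^ 2) := by ring
    rw [setIntegral_congr_fun measurableSet_Ioi hcongr, integral_const_mul, glasser ha hp]
    have hsqrt : Real.sqrt (2 * π) = Real.sqrt 2 * Real.sqrt π :=
      Real.sqrt_mul (by norm_num) π
    rw [hpdef, hsqrt]
    have hπs : Real.sqrt π ≠ 0 := by positivity
    field_simp
end

section
/- For all real numbers p > 0 and q > 0, ∫₀^∞ exp(−p²t² − q²/t²) dt = (√π/(2p))·exp(−2pq). -/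
open Real MeasureTheory Set

-- surjectivity of u ↦ u - a/u from Ioi 0 onto ℝ
lemma phi_image (a : ℝ) (ha : 0 < a) :
    (fun u : ℝ => u - a / u) '' Set.Ioi 0 = Set.univ := by
  apply Set.eq_univ_of_forall
  intro x
  set s := Real.sqrt (x ^ 2 + 4 * a) with hs_def
  have hpos : (0:ℝ) < x ^ 2 + 4 * a := by positivity
  have hs2 : s ^ 2 = x ^ 2 + 4 * a := Real.sq_sqrt hpos.le
  have hsx : |x| < s := by
    have : |x| = Real.sqrt (x ^ 2) := (Real.sqrt_sq_eq_abs x).symm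
    rw [this]
    exact Real.sqrt_lt_sqrt (sq_nonneg x) (by linarith)
  have hu : 0 < (x + s) / 2 := by
    have := neg_abs_le x
    linarith
  refine ⟨(x + s) / 2, hu, ?_⟩
  have hxs : x + s ≠ 0 := by intro h; rw [show x + s = 2 * ((x+s)/2) by ring] at h; simp at h; linarith
  field_simp
  nlinarith [hs2]

lemma phi_deriv (a : ℝ) (u : ℝ) (hu : 0 < u) :
    HasDerivWithinAt (fun u : ℝ => u - a / u) (1 + a / u ^ 2) (Set.Ioi 0) u := by
  have h : HasDerivAt (fun u : ℝ => u - a / u) (1 + a / u ^ 2) u := by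
    have h2 := (hasDerivAt_id u).sub ((hasDerivAt_inv hu.ne').const_mul a)
    simp only [div_eq_mul_inv]
    exact h2.congr_deriv (by ring)
  exact h.hasDerivWithinAt

lemma phi_inj (a : ℝ) (ha : 0 < a) : Set.InjOn (fun u : ℝ => u - a / u) (Set.Ioi 0) := by
  have : StrictMonoOn (fun u : ℝ => u - a / u) (Set.Ioi 0) := by
    intro u hu v hv huv
    simp only [Set.mem_Ioi] at hu hv
    have : a / v < a / u := div_lt_div_of_pos_left ha hu huv
    simp only
    linarith
  exact this.injOn

lemma gauss_half (a : ℝ) (ha : 0 < a) :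
    ∫ u in Set.Ioi (0:ℝ), Real.exp (-(u - a/u)^2) = Real.sqrt π / 2 := by
  have hmeas : MeasurableSet (Set.Ioi (0:ℝ)) := measurableSet_Ioi
  -- total integral via substitution v = u - a/u
  have hA : ∫ x in (fun u : ℝ => u - a / u) '' Set.Ioi 0, Real.exp (-x^2)
      = ∫ u in Set.Ioi (0:ℝ), |1 + a / u ^ 2| • Real.exp (-(u - a/u)^2) :=
    integral_image_eq_integral_abs_deriv_smul hmeas (fun u hu => phi_deriv a u hu)
      (phi_inj a ha) (fun x => Real.exp (-x^2))
  rw [phi_image a ha] at hA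
  have hgauss : ∫ x in (Set.univ : Set ℝ), Real.exp (-x^2) = Real.sqrt π := by
    rw [Measure.restrict_univ]
    simpa using integral_gaussian 1
  have habs : Set.EqOn (fun u : ℝ => |1 + a / u ^ 2| • Real.exp (-(u - a/u)^2))
      (fun u : ℝ => (1 + a / u ^ 2) * Real.exp (-(u - a/u)^2)) (Set.Ioi 0) := by
    intro u hu
    simp only [Set.mem_Ioi] at hu
    have : 0 ≤ 1 + a / u ^ 2 := by positivity
    simp [abs_of_nonneg this]
  have hsum : ∫ u in Set.Ioi (0:ℝ), (1 + a / u ^ 2) * Real.exp (-(u - a/u)^2)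
      = Real.sqrt π := by
    rw [← setIntegral_congr_fun hmeas habs, ← hA, hgauss]
  -- integrability of the combined integrand
  have hgint : IntegrableOn (fun x : ℝ => Real.exp (-x^2)) Set.univ := by
    rw [integrableOn_univ]
    simpa using integrable_exp_neg_mul_sq (one_pos)
  have hint : IntegrableOn (fun u : ℝ => (1 + a / u ^ 2) * Real.exp (-(u - a/u)^2))
      (Set.Ioi 0) := by
    have := (integrableOn_image_iff_integrableOn_abs_deriv_smul hmeas
      (fun u hu => phi_deriv a u hu) (phi_inj a ha) (fun x => Real.exp (-x^2))).mp
      (by rw [phi_image a ha]; exact hgint)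
    exact this.congr_fun habs hmeas
  -- continuity / measurability of pieces
  have hcont : ContinuousOn (fun u : ℝ => Real.exp (-(u - a/u)^2)) (Set.Ioi 0) := by
    apply Real.continuous_exp.comp_continuousOn
    apply ContinuousOn.neg
    exact ((continuousOn_id.sub (continuousOn_const.div continuousOn_id
      (fun u hu => ne_of_gt hu))).pow 2)
  have hcont2 : ContinuousOn (fun u : ℝ => (a / u ^ 2) * Real.exp (-(u - a/u)^2))
      (Set.Ioi 0) := by
    apply ContinuousOn.mul _ hcont
    exact continuousOn_const.div (continuousOn_pow 2) (fun u hu => pow_ne_zero 2 (ne_of_gt hu))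
  have hnonneg : ∀ u ∈ Set.Ioi (0:ℝ), (0:ℝ) ≤ (1 + a / u ^ 2) * Real.exp (-(u - a/u)^2) := by
    intro u hu
    simp only [Set.mem_Ioi] at hu
    positivity
  have h1 : IntegrableOn (fun u : ℝ => Real.exp (-(u - a/u)^2)) (Set.Ioi 0) := by
    apply hint.mono' (hcont.aestronglyMeasurable hmeas)
    filter_upwards [ae_restrict_mem hmeas] with u hu
    simp only [Set.mem_Ioi] at hu
    rw [Real.norm_eq_abs, abs_of_pos (Real.exp_pos _)]
    nlinarith [Real.exp_pos (-(u - a/u)^2), div_nonneg ha.le (sq_nonneg u)]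
  have h2 : IntegrableOn (fun u : ℝ => (a / u ^ 2) * Real.exp (-(u - a/u)^2)) (Set.Ioi 0) := by
    apply hint.mono' (hcont2.aestronglyMeasurable hmeas)
    filter_upwards [ae_restrict_mem hmeas] with u hu
    simp only [Set.mem_Ioi] at hu
    have hd : (0:ℝ) ≤ a / u ^ 2 := by positivity
    rw [Real.norm_eq_abs, abs_of_nonneg (by positivity)]
    nlinarith [Real.exp_pos (-(u - a/u)^2)]
  -- substitution u ↦ a/u shows the two pieces are equal
  have hψimage : (fun u : ℝ => a / u) '' Set.Ioi 0 = Set.Ioi 0 := by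
    ext v
    constructor
    · rintro ⟨u, hu, rfl⟩
      exact div_pos ha hu
    · intro hv
      simp only [Set.mem_Ioi] at hv
      exact ⟨a / v, div_pos ha hv, by field_simp⟩
  have hψderiv : ∀ u ∈ Set.Ioi (0:ℝ),
      HasDerivWithinAt (fun u : ℝ => a / u) (-(a / u ^ 2)) (Set.Ioi 0) u := by
    intro u hu
    simp only [Set.mem_Ioi] at hu
    have h := (hasDerivAt_inv hu.ne').const_mul a
    simp only [div_eq_mul_inv]
    exact h.hasDerivWithinAt.congr_deriv (by ring)
  have hψinj : Set.InjOn (fun u : ℝ => a / u) (Set.Ioi 0) := by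
    intro u hu v hv h
    simp only [Set.mem_Ioi] at hu hv
    field_simp at h
    exact h.symm
  have hB : ∫ v in Set.Ioi (0:ℝ), Real.exp (-(v - a/v)^2)
      = ∫ u in Set.Ioi (0:ℝ), |(-(a / u ^ 2))| • Real.exp (-((a/u) - a/(a/u))^2) := by
    conv_lhs => rw [← hψimage]
    exact integral_image_eq_integral_abs_deriv_smul hmeas hψderiv hψinj
      (fun v => Real.exp (-(v - a/v)^2))
  have hBeq : Set.EqOn (fun u : ℝ => |(-(a / u ^ 2))| • Real.exp (-((a/u) - a/(a/u))^2))
      (fun u : ℝ => (a / u ^ 2) * Real.exp (-(u - a/u)^2)) (Set.Ioi 0) := by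
    intro u hu
    simp only [Set.mem_Ioi] at hu
    have h1 : a / (a / u) = u := by field_simp
    have h2 : (0:ℝ) ≤ a / u ^ 2 := by positivity
    simp only [h1, abs_neg, abs_of_nonneg h2, smul_eq_mul]
    congr 1
    ring_nf
  have hI : ∫ u in Set.Ioi (0:ℝ), Real.exp (-(u - a/u)^2)
      = ∫ u in Set.Ioi (0:ℝ), (a / u ^ 2) * Real.exp (-(u - a/u)^2) := by
    rw [hB, setIntegral_congr_fun hmeas hBeq]
  -- split the sum
  have hsplit : ∫ u in Set.Ioi (0:ℝ), (1 + a / u ^ 2) * Real.exp (-(u - a/u)^2)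
      = (∫ u in Set.Ioi (0:ℝ), Real.exp (-(u - a/u)^2))
      + ∫ u in Set.Ioi (0:ℝ), (a / u ^ 2) * Real.exp (-(u - a/u)^2) := by
    rw [← integral_add h1 h2]
    apply setIntegral_congr_fun hmeas
    intro u hu
    ring
  rw [hsplit, ← hI] at hsum
  linarith

/-- The classical integral identity (Lebedev (5.10.10)): for all `p > 0` and `q > 0`,
`∫₀^∞ exp (−p²t² − q²/t²) dt = (√π / (2p)) · exp (−2pq)`. -/
theorem integral_exp_neg_sq_add_inv_sq (p q : ℝ) (hp : 0 < p) (hq : 0 < q) :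
    ∫ t in Set.Ioi (0 : ℝ), Real.exp (-(p ^ 2 * t ^ 2) - q ^ 2 / t ^ 2)
      = (Real.sqrt π / (2 * p)) * Real.exp (-(2 * p * q)) := by
  have ha : 0 < p * q := mul_pos hp hq
  have hsub := integral_comp_mul_left_Ioi
    (fun u : ℝ => Real.exp (-u^2 - (p*q)^2/u^2)) 0 hp
  simp only [mul_zero] at hsub
  have hcongr : ∫ t in Set.Ioi (0:ℝ), Real.exp (-(p ^ 2 * t ^ 2) - q ^ 2 / t ^ 2)
      = ∫ t in Set.Ioi (0:ℝ), Real.exp (-(p*t)^2 - (p*q)^2/(p*t)^2) := by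
    apply setIntegral_congr_fun measurableSet_Ioi
    intro t ht
    simp only [Set.mem_Ioi] at ht
    dsimp only
    have h1 : (p*q)^2/(p*t)^2 = q^2/t^2 := by
      rw [mul_pow, mul_pow, mul_div_mul_left _ _ (pow_ne_zero 2 hp.ne')]
    rw [h1, mul_pow]
  have hred : ∫ u in Set.Ioi (0:ℝ), Real.exp (-u^2 - (p*q)^2/u^2)
      = Real.exp (-(2*(p*q))) * (Real.sqrt π / 2) := by
    rw [← gauss_half (p*q) ha, ← integral_const_mul]
    apply setIntegral_congr_fun measurableSet_Ioi
    intro u hu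
    simp only [Set.mem_Ioi] at hu
    dsimp only
    rw [← Real.exp_add]
    have h2 : -(2*(p*q)) + -(u - (p*q)/u)^2 = -u^2 - (p*q)^2/u^2 := by
      field_simp
      ring
    rw [h2]
  rw [hcongr, hsub, smul_eq_mul, hred, mul_assoc 2 p q]
  field_simp
end

section
/- Let Ξ ∈ ℝ^{n×n} be symmetric positive definite, let C ∈ ℝ^{1×n} be a nonzero row vector, let μ ∈ ℝⁿ, y ∈ ℝ, and c > 0. Define f : ℝⁿ → ℝ by f(x) = (1/2)·(x − μ)ᵀ·Ξ⁻¹·(x − μ) + c·|C·x − y|. If y < C·μ − c·(C·Ξ·Cᵀ), then x* = μ − c·Ξ·Cᵀ is the unique global minimizer of f. -/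
open Matrix

/-- Windowed MAP estimate, lower regime: for `f x = ½(x−μ)ᵀΞ⁻¹(x−μ) + c·|Cx − y|` with `Ξ`
symmetric positive definite, `C ≠ 0` a row vector and `c > 0`, if `y < Cμ − c·(CΞCᵀ)` then
`x* = μ − c·ΞCᵀ` is the unique global minimizer of `f`. -/
theorem map_estimate_lower_regime
    {n : ℕ} (Ξ : Matrix (Fin n) (Fin n) ℝ) (hΞ : Ξ.PosDef)
    (C : Fin n → ℝ) (hC : C ≠ 0) (μ : Fin n → ℝ) (y c : ℝ) (hc : 0 < c)
    (f : (Fin n → ℝ) → ℝ)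
    (hf : ∀ x, f x = (1 / 2) * ((x - μ) ⬝ᵥ (Ξ⁻¹ *ᵥ (x - μ))) + c * |C ⬝ᵥ x - y|)
    (hy : y < C ⬝ᵥ μ - c * (C ⬝ᵥ (Ξ *ᵥ C))) :
    ∀ x : Fin n → ℝ, x ≠ μ - c • (Ξ *ᵥ C) → f (μ - c • (Ξ *ᵥ C)) < f x := by
  intro x hx
  set A := Ξ⁻¹ with hA
  have hIC : A *ᵥ (Ξ *ᵥ C) = C := by
    rw [mulVec_mulVec, hA, Matrix.nonsing_inv_mul Ξ (isUnit_iff_ne_zero.mpr hΞ.det_pos.ne'), one_mulVec]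
  have hAsymm : Aᵀ = A := (hΞ.inv.1 : Aᴴ = A)
  set s := μ - c • (Ξ *ᵥ C) with hs
  set d := x - s with hd
  have hdne : d ≠ 0 := sub_ne_zero.mpr hx
  have hpos : 0 < d ⬝ᵥ (A *ᵥ d) := by simpa using hΞ.inv.dotProduct_mulVec_pos hdne
  have h1 : x - μ = d - c • (Ξ *ᵥ C) := by
    rw [hd, hs]; abel
  have e1 : A *ᵥ (d - c • (Ξ *ᵥ C)) = A *ᵥ d - c • C := by
    rw [mulVec_sub, mulVec_smul, hIC]
  have esym : (Ξ *ᵥ C) ⬝ᵥ (A *ᵥ d) = C ⬝ᵥ d := by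
    rw [dotProduct_mulVec, ← hAsymm, vecMul_transpose, hIC]
  have hq : (x - μ) ⬝ᵥ (A *ᵥ (x - μ))
      = d ⬝ᵥ (A *ᵥ d) - 2 * c * (C ⬝ᵥ d) + c ^ 2 * (C ⬝ᵥ (Ξ *ᵥ C)) := by
    rw [h1, e1, sub_dotProduct, dotProduct_sub, dotProduct_sub, smul_dotProduct,
        smul_dotProduct, dotProduct_smul, dotProduct_smul, esym]
    rw [show C ⬝ᵥ d = d ⬝ᵥ C from dotProduct_comm _ _,
        show (Ξ *ᵥ C) ⬝ᵥ C = C ⬝ᵥ (Ξ *ᵥ C) from dotProduct_comm _ _]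
    simp only [smul_eq_mul]
    ring
  have hCx : C ⬝ᵥ x = C ⬝ᵥ μ - c * (C ⬝ᵥ (Ξ *ᵥ C)) + C ⬝ᵥ d := by
    have : x = s + d := by rw [hd]; abel
    rw [this, dotProduct_add, hs, dotProduct_sub, dotProduct_smul]
    simp only [smul_eq_mul]
    try ring
  have hsμ : s - μ = -(c • (Ξ *ᵥ C)) := by rw [hs]; abel
  have hqs : (s - μ) ⬝ᵥ (A *ᵥ (s - μ)) = c ^ 2 * (C ⬝ᵥ (Ξ *ᵥ C)) := by
    rw [hsμ]
    rw [mulVec_neg, mulVec_smul, hIC, dotProduct_neg, neg_dotProduct, smul_dotProduct,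
        dotProduct_smul, neg_neg, smul_eq_mul, smul_eq_mul]
    have h2 : (Ξ *ᵥ C) ⬝ᵥ C = C ⬝ᵥ (Ξ *ᵥ C) := dotProduct_comm _ _
    rw [h2]; ring
  have hCs : C ⬝ᵥ s = C ⬝ᵥ μ - c * (C ⬝ᵥ (Ξ *ᵥ C)) := by
    rw [hs, dotProduct_sub, dotProduct_smul]; simp only [smul_eq_mul]
  have habs_s : |C ⬝ᵥ s - y| = C ⬝ᵥ s - y := by
    rw [abs_of_pos]; rw [hCs]; linarith
  rw [hf x, hf s, hq, hqs, habs_s, hCs]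
  have habs : C ⬝ᵥ x - y ≤ |C ⬝ᵥ x - y| := le_abs_self _
  nlinarith [hCx, habs, hpos]
end

section
/- Let Ξ ∈ ℝ^{n×n} be symmetric positive definite, let C ∈ ℝ^{1×n} be a nonzero row vector, let μ ∈ ℝⁿ, y ∈ ℝ, and c > 0. Define f : ℝⁿ → ℝ by f(x) = (1/2)·(x − μ)ᵀ·Ξ⁻¹·(x − μ) + c·|C·x − y|. If y > C·μ + c·(C·Ξ·Cᵀ), then x* = μ + c·Ξ·Cᵀ is the unique global minimizer of f. -/
open Matrix

/-- Windowed MAP estimate, upper regime: for `f x = ½(x−μ)ᵀΞ⁻¹(x−μ) + c·|Cx − y|` with `Ξ`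
symmetric positive definite, `C ≠ 0` a row vector and `c > 0`, if `y > Cμ + c·(CΞCᵀ)` then
`x* = μ + c·ΞCᵀ` is the unique global minimizer of `f`. -/
theorem map_estimate_upper_regime
    {n : ℕ} (Ξ : Matrix (Fin n) (Fin n) ℝ) (hΞ : Ξ.PosDef)
    (C : Fin n → ℝ) (hC : C ≠ 0) (μ : Fin n → ℝ) (y c : ℝ) (hc : 0 < c)
    (f : (Fin n → ℝ) → ℝ)
    (hf : ∀ x, f x = (1 / 2) * ((x - μ) ⬝ᵥ (Ξ⁻¹ *ᵥ (x - μ))) + c * |C ⬝ᵥ x - y|)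
    (hy : C ⬝ᵥ μ + c * (C ⬝ᵥ (Ξ *ᵥ C)) < y) :
    ∀ x : Fin n → ℝ, x ≠ μ + c • (Ξ *ᵥ C) → f (μ + c • (Ξ *ᵥ C)) < f x := by
  intro x hx
  have hQ : (Ξ⁻¹).PosDef := hΞ.inv
  set xs : Fin n → ℝ := μ + c • (Ξ *ᵥ C) with hxs
  set d : Fin n → ℝ := x - xs with hd
  have hdne : d ≠ 0 := sub_ne_zero.mpr hx
  set w : Fin n → ℝ := c • (Ξ *ᵥ C) with hw
  have hinv : Ξ⁻¹ *ᵥ (Ξ *ᵥ C) = C := by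
    rw [mulVec_mulVec, Matrix.nonsing_inv_mul Ξ (isUnit_iff_ne_zero.mpr hΞ.det_pos.ne'),
      one_mulVec]
  have hQw : Ξ⁻¹ *ᵥ w = c • C := by
    rw [hw, mulVec_smul, hinv]
  -- symmetry of Ξ⁻¹
  have hsym : ∀ u v : Fin n → ℝ, u ⬝ᵥ (Ξ⁻¹ *ᵥ v) = v ⬝ᵥ (Ξ⁻¹ *ᵥ u) := by
    intro u v
    have ht : (Ξ⁻¹)ᵀ = Ξ⁻¹ := hQ.isHermitian
    rw [dotProduct_mulVec, ← mulVec_transpose, ht, dotProduct_comm]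
  have hxμ : x - μ = d + w := by
    simp [hd, hw, hxs]; abel
  have hxsμ : xs - μ = w := by simp [hxs, hw]
  -- expansion
  have hexp : (x - μ) ⬝ᵥ (Ξ⁻¹ *ᵥ (x - μ))
      = d ⬝ᵥ (Ξ⁻¹ *ᵥ d) + 2 * (c * (d ⬝ᵥ C)) + w ⬝ᵥ (Ξ⁻¹ *ᵥ w) := by
    have hdw : d ⬝ᵥ (Ξ⁻¹ *ᵥ w) = c * (d ⬝ᵥ C) := by
      rw [hQw, dotProduct_smul, smul_eq_mul]
    rw [hxμ, mulVec_add, dotProduct_add, add_dotProduct, add_dotProduct,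
      hsym w d, hdw]
    ring
  have hCxs : C ⬝ᵥ xs = C ⬝ᵥ μ + c * (C ⬝ᵥ (Ξ *ᵥ C)) := by
    simp [hxs, hw, dotProduct_add, dotProduct_smul, smul_eq_mul]
  have hCx : C ⬝ᵥ x = C ⬝ᵥ xs + C ⬝ᵥ d := by
    simp [hd, dotProduct_sub]
  -- value at xs
  have hfxs : f xs = (1 / 2) * (w ⬝ᵥ (Ξ⁻¹ *ᵥ w)) + c * (y - C ⬝ᵥ xs) := by
    rw [hf, hxsμ, abs_of_neg (by rw [hCxs]; linarith)]
    ring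
  -- abs lower bound
  have habs : |C ⬝ᵥ x - y| ≥ y - C ⬝ᵥ x := by
    rw [abs_sub_comm]; exact le_abs_self _
  have hpos : 0 < d ⬝ᵥ (Ξ⁻¹ *ᵥ d) := by
    have := hQ.dotProduct_mulVec_pos hdne
    simpa using this
  have hdC : d ⬝ᵥ C = C ⬝ᵥ d := dotProduct_comm _ _
  have habs' : y - (C ⬝ᵥ xs + C ⬝ᵥ d) ≤ |C ⬝ᵥ xs + C ⬝ᵥ d - y| := by
    rw [← hCx]; exact habs
  have h1 : c * (y - (C ⬝ᵥ xs + C ⬝ᵥ d)) ≤ c * |C ⬝ᵥ xs + C ⬝ᵥ d - y| :=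
    mul_le_mul_of_nonneg_left habs' hc.le
  have : f x ≥ (1 / 2) * (d ⬝ᵥ (Ξ⁻¹ *ᵥ d)) + f xs := by
    rw [hf x, hexp, hfxs, hCx]
    nlinarith [h1, hdC]
  linarith
end

section
/- Let Ξ ∈ ℝ^{n×n} be symmetric positive definite, let C ∈ ℝ^{1×n} be a nonzero row vector, let μ ∈ ℝⁿ, y ∈ ℝ, and c > 0. Define f : ℝⁿ → ℝ by f(x) = (1/2)·(x − μ)ᵀ·Ξ⁻¹·(x − μ) + c·|C·x − y|. If C·μ − c·(C·Ξ·Cᵀ) ≤ y ≤ C·μ + c·(C·Ξ·Cᵀ), then x* = μ + ((y − C·μ)/(C·Ξ·Cᵀ))·Ξ·Cᵀ is the unique global minimizer of f, and it satisfies C·x* = y. -/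
open Matrix

/-- Windowed MAP estimate, middle regime: for `f x = ½(x−μ)ᵀΞ⁻¹(x−μ) + c·|Cx − y|` with `Ξ`
symmetric positive definite, `C ≠ 0` a row vector and `c > 0`, if
`Cμ − c·(CΞCᵀ) ≤ y ≤ Cμ + c·(CΞCᵀ)` then `x* = μ + ((y − Cμ)/(CΞCᵀ))·ΞCᵀ` is the unique
global minimizer of `f`, and it satisfies `C x* = y`. -/
theorem map_estimate_middle_regime
    {n : ℕ} (Ξ : Matrix (Fin n) (Fin n) ℝ) (hΞ : Ξ.PosDef)
    (C : Fin n → ℝ) (hC : C ≠ 0) (μ : Fin n → ℝ) (y c : ℝ) (hc : 0 < c)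
    (f : (Fin n → ℝ) → ℝ)
    (hf : ∀ x, f x = (1 / 2) * ((x - μ) ⬝ᵥ (Ξ⁻¹ *ᵥ (x - μ))) + c * |C ⬝ᵥ x - y|)
    (hy₁ : C ⬝ᵥ μ - c * (C ⬝ᵥ (Ξ *ᵥ C)) ≤ y) (hy₂ : y ≤ C ⬝ᵥ μ + c * (C ⬝ᵥ (Ξ *ᵥ C))) :
    (∀ x : Fin n → ℝ, x ≠ μ + ((y - C ⬝ᵥ μ) / (C ⬝ᵥ (Ξ *ᵥ C))) • (Ξ *ᵥ C) →
      f (μ + ((y - C ⬝ᵥ μ) / (C ⬝ᵥ (Ξ *ᵥ C))) • (Ξ *ᵥ C)) < f x) ∧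
    C ⬝ᵥ (μ + ((y - C ⬝ᵥ μ) / (C ⬝ᵥ (Ξ *ᵥ C))) • (Ξ *ᵥ C)) = y := by
  set s := C ⬝ᵥ (Ξ *ᵥ C) with hs_def
  have hs : 0 < s := by
    have := hΞ.dotProduct_mulVec_pos hC
    simpa [hs_def] using this
  set α := (y - C ⬝ᵥ μ) / s with hα_def
  set z := Ξ *ᵥ C with hz_def
  set xs := μ + α • z with hxs_def
  -- basic facts
  have hdet : IsUnit Ξ.det := hΞ.det_pos.ne'.isUnit
  have hinvΞ : Ξ⁻¹ *ᵥ z = C := by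
    rw [hz_def, mulVec_mulVec, Matrix.nonsing_inv_mul Ξ hdet, one_mulVec]
  have hΞinvPD : Ξ⁻¹.PosDef := hΞ.inv
  have hsymm : Ξ⁻¹ᵀ = Ξ⁻¹ := by
    have := hΞinvPD.1
    simpa [Matrix.IsHermitian, Matrix.conjTranspose_eq_transpose_of_trivial] using this
  have hCz : C ⬝ᵥ z = s := rfl
  have hCxs : C ⬝ᵥ xs = y := by
    rw [hxs_def, dotProduct_add, dotProduct_smul, hCz, smul_eq_mul, hα_def,
      div_mul_cancel₀ _ hs.ne']
    ring
  refine ⟨?_, hCxs⟩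
  -- |α| ≤ c
  have hαc : |α| ≤ c := by
    rw [hα_def, abs_div, abs_of_pos hs, div_le_iff₀ hs]
    rw [abs_le]
    constructor <;> nlinarith
  intro x hx
  set d := x - xs with hd_def
  have hd0 : d ≠ 0 := sub_ne_zero.mpr hx
  -- symmetric move: z ⬝ᵥ Ξ⁻¹ *ᵥ d = C ⬝ᵥ d
  have hmove : z ⬝ᵥ (Ξ⁻¹ *ᵥ d) = C ⬝ᵥ d := by
    rw [dotProduct_mulVec, ← mulVec_transpose, hsymm, hinvΞ]
  have hmove2 : d ⬝ᵥ (Ξ⁻¹ *ᵥ z) = C ⬝ᵥ d := by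
    rw [hinvΞ, dotProduct_comm]
  have hzz : z ⬝ᵥ (Ξ⁻¹ *ᵥ z) = s := by rw [hinvΞ, dotProduct_comm, hCz]
  have hquad : 0 < d ⬝ᵥ (Ξ⁻¹ *ᵥ d) := by
    have := hΞinvPD.dotProduct_mulVec_pos hd0
    simpa using this
  set t := C ⬝ᵥ d with ht_def
  have hxμ : x - μ = d + α • z := by rw [hd_def, hxs_def]; abel
  have hCx : C ⬝ᵥ x - y = t := by
    have : C ⬝ᵥ x = C ⬝ᵥ xs + t := by
      rw [ht_def, hd_def, dotProduct_sub]; ring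
    rw [this, hCxs]; ring
  have hfx : f x = (1/2) * (d ⬝ᵥ (Ξ⁻¹ *ᵥ d)) + α * t + (1/2) * α^2 * s + c * |t| := by
    rw [hf x, hxμ, hCx]
    rw [mulVec_add, mulVec_smul, dotProduct_add, add_dotProduct, add_dotProduct,
      dotProduct_smul, dotProduct_smul, smul_dotProduct, smul_dotProduct,
      hmove, hmove2, hzz]
    simp only [smul_eq_mul]
    ring
  have hfxs : f xs = (1/2) * α^2 * s := by
    rw [hf xs]
    have h1 : xs - μ = α • z := by rw [hxs_def]; abel
    have h2 : C ⬝ᵥ xs - y = 0 := by rw [hCxs]; ring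
    rw [h1, h2, mulVec_smul, dotProduct_smul, smul_dotProduct, hzz]
    simp only [smul_eq_mul, abs_zero]
    ring
  rw [hfx, hfxs]
  have habs := abs_le.mp hαc
  rcases abs_cases t with ⟨h1, h2⟩ | ⟨h1, h2⟩ <;> nlinarith [abs_nonneg t]
end
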